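/- For any discrete POVM A : Ω_A → L(H), define the quotient statistic S : Ω_A → Ω_A/∼_A where x ∼_A x′ iff A(x) = c A(x′) for some c > 0 (restricting to non-vanishing effects). Then the pushforward POVM Ā := A_S is pairwise linearly independent, and there exist h : Ω_A → (0,∞) and a non-vanishing operator function G on Ω_A/∼_A with A(x) = h(x)·G(S(x)); in particular S is a sufficient statistic for A and Ā ≃ A (fuzzy equivalent). -/

import Mathlib

open MeasureTheory
open scoped InnerProductSpace ENNReal

/-- A positive-operator valued measure on outcome space `Ω` over the Hilbert space `H`.
σ-additivity in the weak operator topology is encoded by the family of scalar measures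
`E ↦ ⟪x, A(E) x⟫` attached to each vector `x`. -/
structure POVM (Ω : Type*) [MeasurableSpace Ω] (H : Type*) [NormedAddCommGroup H]
    [InnerProductSpace ℂ H] [CompleteSpace H] where
  toFun : Set Ω → H →L[ℂ] H
  pos : ∀ E, MeasurableSet E → (toFun E).IsPositive
  map_univ : toFun Set.univ = 1
  measure : H → MeasureTheory.Measure Ω
  measure_apply : ∀ (x : H) (E : Set Ω), MeasurableSet E →
    measure x E = ENNReal.ofReal (⟪x, toFun E x⟫_ℂ).re

variable {H : Type*} [NormedAddCommGroup H] [InnerProductSpace ℂ H] [CompleteSpace H]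

/-- Proportionality by a positive scalar: `x ∼_A x'` iff `A x = c • A x'` for some `c > 0`. -/
def propRel {H : Type*} [NormedAddCommGroup H] [InnerProductSpace ℂ H] [CompleteSpace H]
    {ΩA : Type*} (A : ΩA → H →L[ℂ] H) : ΩA → ΩA → Prop :=
  fun x x' => ∃ c : ℝ, 0 < c ∧ A x = (c : ℂ) • A x'

/-- Extensionality via the quadratic form, for continuous linear maps over `ℂ`. -/
lemma clm_ext_inner {T S : H →L[ℂ] H} (hTS : ∀ v, ⟪v, T v⟫_ℂ = ⟪v, S v⟫_ℂ) : T = S := by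
  have : (T : H →ₗ[ℂ] H) = (S : H →ₗ[ℂ] H) := by
    rw [← ext_inner_map]
    intro x
    have := hTS x
    show ⟪T x, x⟫_ℂ = ⟪S x, x⟫_ℂ
    rw [← inner_conj_symm (T x) x, ← inner_conj_symm (S x) x]
    exact congrArg (starRingEnd ℂ) this
  exact ContinuousLinearMap.coe_injective this

/-- For a positive operator, the quadratic form is real. -/
lemma inner_self_real {T : H →L[ℂ] H} (hT : T.IsPositive) (v : H) :
    ⟪v, T v⟫_ℂ = ((⟪v, T v⟫_ℂ).re : ℂ) := by
  obtain ⟨h1, _⟩ := (ContinuousLinearMap.isPositive_iff_complex T).mp hT v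
  have hc : ⟪v, T v⟫_ℂ = (starRingEnd ℂ) ⟪T v, v⟫_ℂ := (inner_conj_symm _ _).symm
  rw [hc, ← h1]
  simp [Complex.conj_ofReal]

/-- A positive operator's quadratic form has nonnegative real part. -/
lemma inner_self_re_nonneg {T : H →L[ℂ] H} (hT : T.IsPositive) (v : H) :
    0 ≤ (⟪v, T v⟫_ℂ).re := by
  have := hT.inner_nonneg_right v
  simpa using (Complex.le_def.mp this).1

/-- A nonzero positive operator has a vector with strictly positive quadratic form. -/
lemma exists_inner_self_pos {T : H →L[ℂ] H} (hT : T.IsPositive) (hT0 : T ≠ 0) :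
    ∃ v, 0 < (⟪v, T v⟫_ℂ).re := by
  by_contra hc
  push_neg at hc
  apply hT0
  have hzero : ∀ x, ⟪(T : H →ₗ[ℂ] H) x, x⟫_ℂ = 0 := by
    intro x
    have hre : (⟪x, T x⟫_ℂ).re = 0 := le_antisymm (hc x) (inner_self_re_nonneg hT x)
    have : ⟪x, T x⟫_ℂ = 0 := by rw [inner_self_real hT x, hre]; simp
    rw [← inner_conj_symm] at this
    simpa using congrArg (starRingEnd ℂ) this
  have := (inner_map_self_eq_zero (T : H →ₗ[ℂ] H)).mp hzero
  exact ContinuousLinearMap.coe_injective (by simpa using this)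

/-- For a non-vanishing discrete POVM `A`, the quotient statistic
`S : Ω_A → Ω_A/∼_A` by positive proportionality yields a pairwise linearly independent
pushforward POVM `Ā(s) = ∑_{S(x)=s} A(x)`; moreover `A` factorizes as
`A(x) = h(x) G(S(x))` with `h > 0` and non-vanishing `G` (so `S` is sufficient), and
`Ā` and `A` are fuzzy equivalent via Markov matrices. -/
theorem stmt17 {ΩA : Type*} [Countable ΩA]
    (A : ΩA → H →L[ℂ] H) (hpos : ∀ a, (A a).IsPositive) (hnv : ∀ a, A a ≠ 0)
    (hcomp : ∀ x : H, HasSum (fun a => ⟪x, A a x⟫_ℂ) ⟪x, x⟫_ℂ)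
    (Abar : Quot (propRel A) → H →L[ℂ] H)
    (hAbar : ∀ (s : Quot (propRel A)) (v : H),
      HasSum (fun a : {a : ΩA // Quot.mk (propRel A) a = s} => ⟪v, A a.1 v⟫_ℂ)
        ⟪v, Abar s v⟫_ℂ) :
    (∃ (h : ΩA → ℝ) (G : Quot (propRel A) → H →L[ℂ] H), (∀ a, 0 < h a) ∧
        (∀ s, G s ≠ 0) ∧ ∀ a : ΩA, A a = (h a : ℂ) • G (Quot.mk (propRel A) a)) ∧
    (∀ s s' : Quot (propRel A), s ≠ s' → LinearIndependent ℂ ![Abar s, Abar s']) ∧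
    (∃ κ : Quot (propRel A) → ΩA → ℝ, (∀ s y, 0 ≤ κ s y) ∧
        (∀ y, HasSum (fun s => κ s y) 1) ∧
        ∀ (s : Quot (propRel A)) (v : H),
          (⟪v, Abar s v⟫_ℂ).re = ∑' y, κ s y * (⟪v, A y v⟫_ℂ).re) ∧
    (∃ κ' : ΩA → Quot (propRel A) → ℝ, (∀ y s, 0 ≤ κ' y s) ∧
        (∀ s, HasSum (fun y => κ' y s) 1) ∧
        ∀ (y : ΩA) (v : H),
          (⟪v, A y v⟫_ℂ).re = ∑' s, κ' y s * (⟪v, Abar s v⟫_ℂ).re) := by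
  classical
  -- `propRel A` is an equivalence relation
  have hequiv : Equivalence (propRel A) := by
    constructor
    · intro x; exact ⟨1, one_pos, by simp⟩
    · rintro x y ⟨c, hc, hxy⟩
      refine ⟨c⁻¹, inv_pos.mpr hc, ?_⟩
      rw [hxy]
      rw [smul_smul]
      have : ((c : ℂ))⁻¹ * c = 1 := by
        rw [inv_mul_cancel₀]
        exact_mod_cast hc.ne'
      push_cast
      rw [this, one_smul]
    · rintro x y z ⟨c, hc, hxy⟩ ⟨d, hd, hyz⟩
      exact ⟨c * d, mul_pos hc hd, by rw [hxy, hyz, smul_smul]; push_cast; ring_nf⟩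
  have hmk_iff : ∀ a b : ΩA,
      (Quot.mk (propRel A) a = Quot.mk (propRel A) b) ↔ propRel A a b := by
    intro a b
    exact Quot.eq.trans hequiv.eqvGen_iff
  -- the factorization
  have key : ∀ a : ΩA, ∃ c : ℝ, 0 < c ∧
      A a = (c : ℂ) • A (Quot.out (Quot.mk (propRel A) a)) := by
    intro a
    exact (hmk_iff a _).mp (Quot.out_eq _).symm
  choose h hh hfac using key
  set G : Quot (propRel A) → H →L[ℂ] H := fun s => A (Quot.out s) with hG
  have hGpos : ∀ s, (G s).IsPositive := fun s => hpos _
  have hGnv : ∀ s, G s ≠ 0 := fun s => hnv _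
  have hfac' : ∀ a : ΩA, A a = ((h a : ℝ) : ℂ) • G (Quot.mk (propRel A) a) := hfac
  -- witnesses of positivity for each `G s`
  have hvs : ∀ s, ∃ v, 0 < (⟪v, G s v⟫_ℂ).re := fun s =>
    exists_inner_self_pos (hGpos s) (hGnv s)
  choose w hw using hvs
  -- the quadratic form of `A a` in terms of `G s` on the fiber over `s`
  have hsum : ∀ (s : Quot (propRel A)) (v : H),
      HasSum (fun a : {a : ΩA // Quot.mk (propRel A) a = s} =>
        ((h a.1 : ℝ) : ℂ) * ⟪v, G s v⟫_ℂ) ⟪v, Abar s v⟫_ℂ := by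
    intro s v
    have heq : (fun a : {a : ΩA // Quot.mk (propRel A) a = s} => ⟪v, A a.1 v⟫_ℂ)
        = fun a => ((h a.1 : ℝ) : ℂ) * ⟪v, G s v⟫_ℂ := by
      funext a
      rw [hfac' a.1, a.2, ContinuousLinearMap.smul_apply, inner_smul_right]
    have := hAbar s v
    rwa [heq] at this
  -- the total weight of each fiber
  have hgne : ∀ s, ⟪w s, G s (w s)⟫_ℂ ≠ 0 := by
    intro s hz
    have := hw s
    rw [hz] at this
    simp at this
  set C : Quot (propRel A) → ℝ :=
    fun s => ((⟪w s, Abar s (w s)⟫_ℂ) / ⟪w s, G s (w s)⟫_ℂ).re with hC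
  have hCsum : ∀ s, HasSum (fun a : {a : ΩA // Quot.mk (propRel A) a = s} => h a.1) (C s) := by
    intro s
    have h1 := (hsum s (w s)).div_const (⟪w s, G s (w s)⟫_ℂ)
    have h2 : (fun a : {a : ΩA // Quot.mk (propRel A) a = s} =>
        (((h a.1 : ℝ) : ℂ) * ⟪w s, G s (w s)⟫_ℂ) / ⟪w s, G s (w s)⟫_ℂ)
        = fun a => ((h a.1 : ℝ) : ℂ) := by
      funext a
      rw [mul_div_cancel_right₀ _ (hgne s)]
    rw [h2] at h1
    have := Complex.hasSum_re h1
    simpa using this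
  have hCc : ∀ s, HasSum (fun a : {a : ΩA // Quot.mk (propRel A) a = s} =>
      ((h a.1 : ℝ) : ℂ)) ((C s : ℝ) : ℂ) := by
    intro s
    exact Complex.ofRealCLM.hasSum (hCsum s)
  have hCpos : ∀ s, 0 < C s := by
    intro s
    have hle : h (Quot.out s) ≤ C s := by
      refine le_hasSum (hCsum s) ⟨Quot.out s, Quot.out_eq s⟩ (fun a _ => (hh a.1).le)
    exact lt_of_lt_of_le (hh _) hle
  -- `Abar s = C s • G s`
  have hAbarG : ∀ s, Abar s = ((C s : ℝ) : ℂ) • G s := by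
    intro s
    apply clm_ext_inner
    intro v
    have h1 := hsum s v
    have h2 := (hCc s).mul_right (⟪v, G s v⟫_ℂ)
    have := h1.unique h2
    rw [this, ContinuousLinearMap.smul_apply, inner_smul_right]
  refine ⟨⟨h, G, hh, hGnv, hfac'⟩, ?_, ?_, ?_⟩
  · -- pairwise linear independence
    intro s s' hne
    rw [LinearIndependent.pair_iff]
    intro α β hαβ
    rw [hAbarG s, hAbarG s', smul_smul, smul_smul] at hαβ
    set a : ℂ := α * ((C s : ℝ) : ℂ) with ha
    set b : ℂ := β * ((C s' : ℝ) : ℂ) with hb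
    have hCne : ((C s : ℝ) : ℂ) ≠ 0 := by
      exact_mod_cast (hCpos s).ne'
    have hC'ne : ((C s' : ℝ) : ℂ) ≠ 0 := by
      exact_mod_cast (hCpos s').ne'
    have ha0 : a = 0 := by
      by_contra ha0
      -- then `G s` is a complex multiple of `G s'`
      have hGeq : G s = (-b / a) • G s' := by
        have h1 : a • G s = -(b • G s') := by
          rw [← add_eq_zero_iff_eq_neg] at *
          exact hαβ
        calc G s = a⁻¹ • (a • G s) := by rw [smul_smul, inv_mul_cancel₀ ha0, one_smul]
          _ = a⁻¹ • -(b • G s') := by rw [h1]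
          _ = (-b / a) • G s' := by
              rw [smul_neg, smul_smul, ← neg_smul, div_eq_mul_inv, mul_comm, neg_mul]
      -- evaluate at the witness for `G s`
      set p : ℂ := ⟪w s, G s (w s)⟫_ℂ with hp
      set q : ℂ := ⟪w s, G s' (w s)⟫_ℂ with hq
      have hpq : p = (-b / a) * q := by
        rw [hp, hGeq, ContinuousLinearMap.smul_apply, inner_smul_right]
      have hpre : 0 < p.re := hw s
      have hqre0 : 0 ≤ q.re := inner_self_re_nonneg (hGpos s') (w s)
      have hqne : q ≠ 0 := by
        intro hz
        rw [hz, mul_zero] at hpq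
        rw [hpq] at hpre
        simp at hpre
      have hqrepos : 0 < q.re := by
        rcases lt_or_eq_of_le hqre0 with h' | h'
        · exact h'
        · exfalso
          apply hqne
          have hqr := inner_self_real (hGpos s') (w s)
          rw [← hq] at hqr
          rw [hqr, ← h', Complex.ofReal_zero]
      -- hence the ratio is a positive real
      have hpreal : p = ((p.re : ℝ) : ℂ) := inner_self_real (hGpos s) (w s)
      have hqreal : q = ((q.re : ℝ) : ℂ) := inner_self_real (hGpos s') (w s)
      set t : ℝ := p.re / q.re with ht
      have htpos : 0 < t := div_pos hpre hqrepos
      have hzval : -b / a = ((t : ℝ) : ℂ) := by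
        have heq : ((p.re : ℝ) : ℂ) = (-b / a) * ((q.re : ℝ) : ℂ) := by
          rw [← hpreal, ← hqreal]; exact hpq
        have hqcne : ((q.re : ℝ) : ℂ) ≠ 0 := by exact_mod_cast hqrepos.ne'
        rw [ht, Complex.ofReal_div, eq_div_iff hqcne]
        exact heq.symm
      -- so `s = s'`, contradiction
      apply hne
      have hrel : propRel A (Quot.out s) (Quot.out s') := by
        refine ⟨t, htpos, ?_⟩
        have := hGeq
        rw [hzval] at this
        exact this
      calc s = Quot.mk (propRel A) (Quot.out s) := (Quot.out_eq s).symm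
        _ = Quot.mk (propRel A) (Quot.out s') := Quot.sound hrel
        _ = s' := Quot.out_eq s'
    have hα : α = 0 := by
      rcases mul_eq_zero.mp ha0 with h' | h'
      · exact h'
      · exact absurd h' hCne
    refine ⟨hα, ?_⟩
    rw [ha0, zero_smul, zero_add] at hαβ
    rcases smul_eq_zero.mp hαβ with h' | h'
    · rcases mul_eq_zero.mp h' with h'' | h''
      · exact h''
      · exact absurd h'' hC'ne
    · exact absurd h' (hGnv s')
  · -- Markov matrix from `A` to `Abar`
    refine ⟨fun s y => if Quot.mk (propRel A) y = s then 1 else 0, ?_, ?_, ?_⟩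
    · intro s y
      dsimp only
      split <;> norm_num
    · intro y
      have h1 := hasSum_ite_eq (Quot.mk (propRel A) y) (1 : ℝ)
      have h2 : (fun s => if Quot.mk (propRel A) y = s then (1 : ℝ) else 0)
          = fun s => if s = Quot.mk (propRel A) y then (1 : ℝ) else 0 := by
        funext s
        simp only [eq_comm]
      rw [h2]
      exact h1
    · intro s v
      have h1 := Complex.hasSum_re (hAbar s v)
      have h2 : HasSum ((fun y => (⟪v, A y v⟫_ℂ).re) ∘ ((↑) :
          {y : ΩA | Quot.mk (propRel A) y = s} → ΩA)) ((⟪v, Abar s v⟫_ℂ).re) := h1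
      rw [hasSum_subtype_iff_indicator] at h2
      have h3 : Set.indicator {y : ΩA | Quot.mk (propRel A) y = s}
          (fun y => (⟪v, A y v⟫_ℂ).re)
          = fun y => (if Quot.mk (propRel A) y = s then (1:ℝ) else 0) * (⟪v, A y v⟫_ℂ).re := by
        funext y
        by_cases hy : Quot.mk (propRel A) y = s
        · simp [Set.indicator, hy]
        · simp [Set.indicator, hy]
      rw [h3] at h2
      exact h2.tsum_eq.symm
  · -- Markov matrix from `Abar` to `A`
    refine ⟨fun y s => if s = Quot.mk (propRel A) y then h y / C (Quot.mk (propRel A) y)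
        else 0, ?_, ?_, ?_⟩
    · intro y s
      dsimp only
      split
      · exact div_nonneg (hh y).le (hCpos _).le
      · exact le_refl 0
    · intro s
      have h1 := (hCsum s).div_const (C s)
      rw [div_self (hCpos s).ne'] at h1
      have h2 : HasSum ((fun y => h y / C s) ∘ ((↑) :
          {y : ΩA | Quot.mk (propRel A) y = s} → ΩA)) 1 := h1
      rw [hasSum_subtype_iff_indicator] at h2
      have h3 : Set.indicator {y : ΩA | Quot.mk (propRel A) y = s} (fun y => h y / C s)
          = fun y => if s = Quot.mk (propRel A) y then h y / C (Quot.mk (propRel A) y)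
            else 0 := by
        funext y
        by_cases hy : Quot.mk (propRel A) y = s
        · rw [Set.indicator_of_mem
            (show y ∈ {y : ΩA | Quot.mk (propRel A) y = s} from hy), if_pos hy.symm, hy]
        · rw [Set.indicator_of_notMem
            (show y ∉ {y : ΩA | Quot.mk (propRel A) y = s} from hy),
            if_neg (fun hh' => hy hh'.symm)]
      rw [h3] at h2
      exact h2
    · intro y v
      have hts : (∑' s, (if s = Quot.mk (propRel A) y then h y / C (Quot.mk (propRel A) y)
          else 0) * (⟪v, Abar s v⟫_ℂ).re)
          = (h y / C (Quot.mk (propRel A) y)) * (⟪v, Abar (Quot.mk (propRel A) y) v⟫_ℂ).re := by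
        refine tsum_eq_single (Quot.mk (propRel A) y) ?_ |>.trans (by simp)
        intro s' hs'
        simp [hs']
      rw [hts]
      rw [hAbarG (Quot.mk (propRel A) y), hfac' y]
      simp only [ContinuousLinearMap.smul_apply, inner_smul_right]
      rw [Complex.re_ofReal_mul, Complex.re_ofReal_mul]
      have hCne : C (Quot.mk (propRel A) y) ≠ 0 := (hCpos _).ne'
      field_simp
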